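/- Let H be a complex Hilbert space with dim H ≥ 2 and let T be a bounded linear operator on H with m(T) > 0. Then for every δ > 0 there exist unit vectors x, y ∈ H with ⟨x,y⟩ = 0 and |⟨Tx,Ty⟩| > ((‖T‖² − m(T)²)/(‖T‖² + m(T)²) − δ) · ‖Tx‖‖Ty‖; consequently ε̂(T) ≥ (‖T‖² − m(T)²)/(‖T‖² + m(T)²). -/

import Mathlib

open scoped ComplexInnerProductSpace

noncomputable section

variable {H : Type*} [NormedAddCommGroup H] [InnerProductSpace ℂ H] [CompleteSpace H]

/-- `T` is `ε`-approximately orthogonality preserving: orthogonal vectors are mapped to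
`ε`-orthogonal vectors. -/
def IsAOP (T : H →L[ℂ] H) (ε : ℝ) : Prop :=
  ∀ x y : H, ⟪x, y⟫ = 0 → ‖⟪T x, T y⟫‖ ≤ ε * (‖T x‖ * ‖T y‖)

/-- `ε̂(T)`, the smallest `ε ∈ [0,1]` for which `T` is `ε`-AOP. -/
def epsHat (T : H →L[ℂ] H) : ℝ :=
  sInf {ε : ℝ | 0 ≤ ε ∧ ε ≤ 1 ∧ IsAOP T ε}

/-- The minimum modulus `m(T) = inf {‖T x‖ : ‖x‖ = 1}`. -/
def minMod (T : H →L[ℂ] H) : ℝ :=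
  sInf {r : ℝ | ∃ x : H, ‖x‖ = 1 ∧ ‖T x‖ = r}

/-- The set `ℂ𝒱` of scalar multiples of linear isometries of `H`. -/
def scalarIsoms (H : Type*) [NormedAddCommGroup H] [InnerProductSpace ℂ H] :
    Set (H →L[ℂ] H) :=
  {S | ∃ (c : ℂ) (V : H →L[ℂ] H), (∀ x : H, ‖V x‖ = ‖x‖) ∧ S = c • V}

/-- `dist(T, ℂ𝒱)`. -/
def distCV (T : H →L[ℂ] H) : ℝ := Metric.infDist T (scalarIsoms H)

/-- The set `𝒱` of linear isometries of `H`. -/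
def isoms (H : Type*) [NormedAddCommGroup H] [InnerProductSpace ℂ H] :
    Set (H →L[ℂ] H) :=
  {V | ∀ x : H, ‖V x‖ = ‖x‖}

/-- `dist(T, 𝒱)`. -/
def distV (T : H →L[ℂ] H) : ℝ := Metric.infDist T (isoms H)

open Filter

lemma exists_ortho_pair (hdim : 2 ≤ Module.rank ℂ H) :
    ∃ e f : H, ‖e‖ = 1 ∧ ‖f‖ = 1 ∧ ⟪e, f⟫ = 0 := by
  have hnt : Nontrivial H := by
    rw [← rank_pos_iff_nontrivial (R := ℂ)]
    exact lt_of_lt_of_le (by norm_num) hdim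
  obtain ⟨e, he⟩ := exists_norm_eq H (le_of_lt one_pos)
  have hK : ((ℂ ∙ e)ᗮ : Submodule ℂ H) ≠ ⊥ := by
    intro hbot
    rw [Submodule.orthogonal_eq_bot_iff] at hbot
    have : Module.rank ℂ H ≤ 1 := by
      rw [← rank_top ℂ H, ← hbot]
      simpa using rank_span_le (R := ℂ) {e}
    exact absurd (le_trans hdim this) (by norm_num)
  obtain ⟨f₀, hf₀mem, hf₀⟩ := Submodule.ne_bot_iff _ |>.mp hK
  refine ⟨e, (‖f₀‖:ℂ)⁻¹ • f₀, he, ?_, ?_⟩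
  · rw [norm_smul]
    simp [inv_mul_cancel₀ (norm_ne_zero_iff.mpr hf₀)]
  · have := (Submodule.mem_orthogonal _ f₀).mp hf₀mem e (Submodule.mem_span_singleton_self e)
    rw [inner_smul_right, this, mul_zero]

lemma minMod_bdd (T : H →L[ℂ] H) : BddBelow {r : ℝ | ∃ x : H, ‖x‖ = 1 ∧ ‖T x‖ = r} :=
  ⟨0, fun _ ⟨_, _, hr⟩ => hr ▸ norm_nonneg _⟩

lemma minMod_le_unit (T : H →L[ℂ] H) {x : H} (hx : ‖x‖ = 1) : minMod T ≤ ‖T x‖ :=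
  csInf_le (minMod_bdd T) ⟨x, hx, rfl⟩

lemma minMod_mul_le (T : H →L[ℂ] H) (x : H) : minMod T * ‖x‖ ≤ ‖T x‖ := by
  rcases eq_or_ne x 0 with rfl | hx
  · simp
  · have hn : ‖x‖ ≠ 0 := norm_ne_zero_iff.mpr hx
    have h1 : ‖(‖x‖:ℂ)⁻¹ • x‖ = 1 := by
      simp [norm_smul, inv_mul_cancel₀ hn]
    have := minMod_le_unit T h1
    rw [map_smul, norm_smul] at this
    simp only [norm_inv, Complex.norm_real, Real.norm_eq_abs, abs_norm] at this
    calc minMod T * ‖x‖ ≤ (‖x‖⁻¹ * ‖T x‖) * ‖x‖ := by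
          apply mul_le_mul_of_nonneg_right this (norm_nonneg x)
      _ = ‖T x‖ := by field_simp

set_option maxHeartbeats 1000000 in
lemma key_exists (hdim : 2 ≤ Module.rank ℂ H) (T : H →L[ℂ] H) (hm : 0 < minMod T)
    (δ : ℝ) (hδ : 0 < δ) :
    ∃ x y : H, ‖x‖ = 1 ∧ ‖y‖ = 1 ∧ ⟪x, y⟫ = 0 ∧
      ((‖T‖ ^ 2 - minMod T ^ 2) / (‖T‖ ^ 2 + minMod T ^ 2) - δ) * (‖T x‖ * ‖T y‖)
        < ‖⟪T x, T y⟫‖ := by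
  set m := minMod T with hmdef
  set M := ‖T‖ with hMdef
  set k := (M ^ 2 - m ^ 2) / (M ^ 2 + m ^ 2) with hkdef
  obtain ⟨e0, f0, he0, hf0, hef0⟩ := exists_ortho_pair hdim
  have hmM : m ≤ M := le_trans (minMod_le_unit T he0) (by simpa [he0] using T.le_opNorm e0)
  have hM0 : 0 < M := lt_of_lt_of_le hm hmM
  have hMm2 : 0 < M ^ 2 + m ^ 2 := by positivity
  rcases eq_or_lt_of_le hmM with heq | hlt
  · -- degenerate case m = M, k = 0
    refine ⟨e0, f0, he0, hf0, hef0, ?_⟩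
    have hk0 : k = 0 := by rw [hkdef, ← heq, sub_self, zero_div]
    have h1 : 0 < ‖T e0‖ := lt_of_lt_of_le hm (minMod_le_unit T he0)
    have h2 : 0 < ‖T f0‖ := lt_of_lt_of_le hm (minMod_le_unit T hf0)
    have : (k - δ) * (‖T e0‖ * ‖T f0‖) < 0 :=
      mul_neg_of_neg_of_pos (by rw [hk0]; linarith) (by positivity)
    exact lt_of_lt_of_le this (norm_nonneg _)
  -- main case m < M
  have hM2m2 : 0 < M ^ 2 - m ^ 2 := by nlinarith
  -- sequences of approximate norming vectors
  have hu' : ∀ n : ℕ, ∃ x : H, ‖x‖ = 1 ∧ M - 1 / (n + 1) < ‖T x‖ := by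
    intro n
    rcases lt_or_ge (M - 1 / (n + 1)) 0 with hneg | hpos
    · exact ⟨e0, he0, lt_of_lt_of_le hneg (norm_nonneg _)⟩
    · have hlt' : M - 1 / (n + 1) < ‖T‖ := by
        have h01 : (0:ℝ) < 1 / (n + 1) := by positivity
        rw [← hMdef]; linarith
      obtain ⟨x, hx1, hx2⟩ := T.exists_lt_apply_of_lt_opNorm hlt'
      have hx0 : x ≠ 0 := by
        intro h; rw [h] at hx2; simp at hx2
        rw [← one_div] at hx2; linarith
      have hxn : (0:ℝ) < ‖x‖ := norm_pos_iff.mpr hx0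
      refine ⟨(‖x‖:ℂ)⁻¹ • x, by simp [norm_smul, inv_mul_cancel₀ hxn.ne'], ?_⟩
      rw [map_smul, norm_smul]
      simp only [norm_inv, Complex.norm_real, Real.norm_eq_abs, abs_norm]
      calc M - 1/(n+1) < ‖T x‖ := hx2
        _ = 1 * ‖T x‖ := (one_mul _).symm
        _ ≤ ‖x‖⁻¹ * ‖T x‖ := by
            apply mul_le_mul_of_nonneg_right _ (norm_nonneg _)
            rw [le_inv_comm₀] <;> simp [hxn] <;> linarith [hx1]
  choose u hu1 hu2 using hu'
  have hv' : ∀ n : ℕ, ∃ x : H, ‖x‖ = 1 ∧ ‖T x‖ < m + 1 / (n + 1) := by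
    intro n
    have hne : {r : ℝ | ∃ x : H, ‖x‖ = 1 ∧ ‖T x‖ = r}.Nonempty := ⟨‖T e0‖, e0, he0, rfl⟩
    obtain ⟨r, ⟨x, hx1, hx2⟩, hr⟩ := Real.lt_sInf_add_pos hne
      (show (0:ℝ) < 1 / (n + 1) by positivity)
    exact ⟨x, hx1, by rw [hx2]; exact hr⟩
  choose v hv1 hv2 using hv'
  have h1n : Tendsto (fun n : ℕ => 1 / ((n:ℝ) + 1)) atTop (nhds 0) :=
    tendsto_one_div_add_atTop_nhds_zero_nat
  have hTu : Tendsto (fun n => ‖T (u n)‖) atTop (nhds M) := by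
    apply tendsto_of_tendsto_of_tendsto_of_le_of_le
      (g := fun n : ℕ => M - 1 / (n + 1)) (h := fun _ : ℕ => M)
    · simpa using tendsto_const_nhds.sub h1n
    · exact tendsto_const_nhds
    · exact fun n => le_of_lt (hu2 n)
    · exact fun n => by simpa [hu1 n] using T.le_opNorm (u n)
  have hTv : Tendsto (fun n => ‖T (v n)‖) atTop (nhds m) := by
    apply tendsto_of_tendsto_of_tendsto_of_le_of_le
      (g := fun _ : ℕ => m) (h := fun n : ℕ => m + 1 / (n + 1))
    · exact tendsto_const_nhds
    · simpa using tendsto_const_nhds.add h1n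
    · exact fun n => minMod_le_unit T (hv1 n)
    · exact fun n => le_of_lt (hv2 n)
  have hTu2 : Tendsto (fun n => ‖T (u n)‖ ^ 2) atTop (nhds (M ^ 2)) := hTu.pow 2
  have hTv2 : Tendsto (fun n => ‖T (v n)‖ ^ 2) atTop (nhds (m ^ 2)) := hTv.pow 2
  -- the operator A = T† T and approximate eigenvector estimates
  set A := ContinuousLinearMap.adjoint T ∘L T with hAdef
  have hA : ∀ x y : H, ⟪A x, y⟫ = ⟪T x, T y⟫ := fun x y =>
    ContinuousLinearMap.adjoint_inner_left T y (T x)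
  have hAnorm : ∀ x : H, ‖A x‖ ≤ M ^ 2 * ‖x‖ := by
    intro x
    calc ‖A x‖ ≤ ‖A‖ * ‖x‖ := A.le_opNorm x
      _ ≤ M ^ 2 * ‖x‖ := by
          apply mul_le_mul_of_nonneg_right _ (norm_nonneg x)
          rw [hAdef, ContinuousLinearMap.norm_adjoint_comp_self, ← hMdef, sq]
  set a := fun n => A (u n) - ((M ^ 2 : ℝ) : ℂ) • u n with hadef
  have ha_sq : ∀ n, ‖a n‖ ^ 2 ≤ 2 * M ^ 2 * (M ^ 2 - ‖T (u n)‖ ^ 2) := by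
    intro n
    have hinner : ⟪A (u n), u n⟫ = ((‖T (u n)‖ ^ 2 : ℝ) : ℂ) := by
      rw [hA, inner_self_eq_norm_sq_to_K]; norm_cast
    have hexp : ‖a n‖ ^ 2 = ‖A (u n)‖ ^ 2 - 2 * (M ^ 2 * ‖T (u n)‖ ^ 2) + M ^ 4 := by
      rw [hadef]
      rw [@norm_sub_sq ℂ]
      rw [inner_smul_right, hinner]
      have h1 : ‖((M ^ 2 : ℝ) : ℂ) • u n‖ ^ 2 = M ^ 4 := by
        rw [norm_smul, hu1 n]
        simp [abs_of_nonneg (sq_nonneg M)]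
        ring
      rw [h1]
      simp only [RCLike.re_to_complex, ← Complex.ofReal_mul, Complex.ofReal_re]
    have hAu : ‖A (u n)‖ ^ 2 ≤ M ^ 4 := by
      have := hAnorm (u n)
      rw [hu1 n, mul_one] at this
      nlinarith [norm_nonneg (A (u n))]
    nlinarith
  have ha : Tendsto (fun n => ‖a n‖) atTop (nhds 0) := by
    have hrhs : Tendsto (fun n => 2 * M ^ 2 * (M ^ 2 - ‖T (u n)‖ ^ 2)) atTop (nhds 0) := by
      have := ((tendsto_const_nhds (x := M ^ 2)).sub hTu2).const_mul (2 * M ^ 2)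
      simpa using this
    apply squeeze_zero (g := fun n => Real.sqrt (2 * M ^ 2 * (M ^ 2 - ‖T (u n)‖ ^ 2)))
      (fun n => norm_nonneg _)
    · intro n
      have h1 : ‖a n‖ = Real.sqrt (‖a n‖ ^ 2) := (Real.sqrt_sq (norm_nonneg _)).symm
      rw [h1]
      exact Real.sqrt_le_sqrt (ha_sq n)
    · have := hrhs.sqrt
      simpa using this
  -- Gram-Schmidt data
  set c := fun n => (⟪u n, v n⟫ : ℂ) with hcdef
  set w := fun n => v n - c n • u n with hwdef
  have hvdecomp : ∀ n, v n = c n • u n + w n := fun n => by simp [hwdef]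
  have hucw : ∀ n, ⟪u n, w n⟫ = 0 := by
    intro n
    rw [hwdef]
    simp only [inner_sub_right, inner_smul_right]
    rw [inner_self_eq_norm_sq_to_K, hu1 n]
    push_cast
    ring
  have hcuw : ∀ n, ⟪c n • u n, w n⟫ = 0 := by
    intro n; rw [inner_smul_left, hucw n, mul_zero]
  have hw_sq : ∀ n, ‖w n‖ ^ 2 = 1 - ‖c n‖ ^ 2 := by
    intro n
    have h1 := norm_add_sq_eq_norm_sq_add_norm_sq_of_inner_eq_zero _ _ (hcuw n)
    rw [← hvdecomp n, hv1 n, norm_smul, hu1 n, mul_one] at h1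
    nlinarith [h1]
  have hc_le : ∀ n, ‖c n‖ ≤ 1 := by
    intro n
    have := norm_inner_le_norm (𝕜 := ℂ) (u n) (v n)
    rwa [hu1 n, hv1 n, one_mul] at this
  have hw_le : ∀ n, ‖w n‖ ≤ 1 := by
    intro n
    have := hw_sq n
    nlinarith [norm_nonneg (w n), norm_nonneg (c n)]
  -- the key small quantity ε n
  set ε := fun n => (⟪T (u n), T (w n)⟫ : ℂ) with hεdef
  have hε_le : ∀ n, ‖ε n‖ ≤ ‖a n‖ := by
    intro n
    have h1 : ε n = ⟪a n, w n⟫ := by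
      have h0 : ε n = ⟪A (u n), w n⟫ := (hA (u n) (w n)).symm
      have h2 : a n + ((M ^ 2 : ℝ) : ℂ) • u n = A (u n) := by rw [hadef]; exact sub_add_cancel _ _
      rw [h0, ← h2, inner_add_left, inner_smul_left, hucw n, mul_zero, add_zero]
    rw [h1]
    calc ‖(⟪a n, w n⟫ : ℂ)‖ ≤ ‖a n‖ * ‖w n‖ := norm_inner_le_norm _ _
      _ ≤ ‖a n‖ * 1 := mul_le_mul_of_nonneg_left (hw_le n) (norm_nonneg _)
      _ = ‖a n‖ := mul_one _
  have hε : Tendsto (fun n => ‖ε n‖) atTop (nhds 0) := squeeze_zero (fun n => norm_nonneg _) hε_le ha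
  have hεlim : Tendsto ε atTop (nhds 0) := tendsto_zero_iff_norm_tendsto_zero.mpr hε
  -- the expansion of ‖T v‖²
  have hTv_id : ∀ n, ‖T (v n)‖ ^ 2
      = ‖c n‖ ^ 2 * ‖T (u n)‖ ^ 2 + 2 * ((starRingEnd ℂ) (c n) * ε n).re + ‖T (w n)‖ ^ 2 := by
    intro n
    have h1 : T (v n) = c n • T (u n) + T (w n) := by
      conv_lhs => rw [hvdecomp n]
      simp
    have hee : ⟪T (u n), T (w n)⟫ = ε n := rfl
    rw [h1, @norm_add_sq ℂ]
    rw [inner_smul_left, hee]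
    rw [norm_smul]
    simp only [RCLike.re_to_complex]
    ring
  -- ‖c n‖ → 0
  have hc2M : Tendsto (fun n => ‖c n‖ ^ 2 * (‖T (u n)‖ ^ 2 - m ^ 2)) atTop (nhds 0) := by
    apply squeeze_zero (g := fun n => ‖T (v n)‖ ^ 2 - m ^ 2 + 2 * ‖a n‖)
    · intro n
      have h1 : m ≤ ‖T (u n)‖ := minMod_le_unit T (hu1 n)
      have h2 : 0 ≤ ‖T (u n)‖ ^ 2 - m ^ 2 := by nlinarith [hm]
      positivity
    · intro n
      have h1 : m * ‖w n‖ ≤ ‖T (w n)‖ := minMod_mul_le T (w n)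
      have h2 : m ^ 2 * ‖w n‖ ^ 2 ≤ ‖T (w n)‖ ^ 2 := by
        have hp : 0 ≤ m * ‖w n‖ := by positivity
        nlinarith [mul_le_mul h1 h1 hp (norm_nonneg (T (w n)))]
      have h3 := hTv_id n
      have h4 : |((starRingEnd ℂ) (c n) * ε n).re| ≤ ‖a n‖ := by
        calc |((starRingEnd ℂ) (c n) * ε n).re| ≤ ‖(starRingEnd ℂ) (c n) * ε n‖ :=
              Complex.abs_re_le_norm _
          _ = ‖c n‖ * ‖ε n‖ := by rw [norm_mul, RCLike.norm_conj]
          _ ≤ 1 * ‖a n‖ := mul_le_mul (hc_le n) (hε_le n) (norm_nonneg _) zero_le_one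
          _ = ‖a n‖ := one_mul _
      have h6 := abs_le.mp h4
      have h2' : m ^ 2 * (1 - ‖c n‖ ^ 2) ≤ ‖T (w n)‖ ^ 2 := by rw [← hw_sq n]; exact h2
      have hexp1 : ‖c n‖ ^ 2 * (‖T (u n)‖ ^ 2 - m ^ 2)
          = ‖c n‖ ^ 2 * ‖T (u n)‖ ^ 2 - m ^ 2 * ‖c n‖ ^ 2 := by ring
      have hexp2 : m ^ 2 * (1 - ‖c n‖ ^ 2) = m ^ 2 - m ^ 2 * ‖c n‖ ^ 2 := by ring
      rw [hexp1]
      rw [hexp2] at h2'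
      linarith [h6.1]
    · have := ((hTv2.sub (tendsto_const_nhds (x := m ^ 2))).add (ha.const_mul 2))
      simpa using this
  have hc2 : Tendsto (fun n => ‖c n‖ ^ 2) atTop (nhds 0) := by
    have hev : ∀ᶠ n in atTop, ‖c n‖ ^ 2
        ≤ (2 / (M ^ 2 - m ^ 2)) * (‖c n‖ ^ 2 * (‖T (u n)‖ ^ 2 - m ^ 2)) := by
      have hev0 : ∀ᶠ n in atTop, (M ^ 2 + m ^ 2) / 2 < ‖T (u n)‖ ^ 2 :=
        hTu2.eventually (eventually_gt_nhds (by nlinarith))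
      filter_upwards [hev0] with n hn
      have h1 : (M ^ 2 - m ^ 2) / 2 ≤ ‖T (u n)‖ ^ 2 - m ^ 2 := by linarith
      have h2 : 0 ≤ ‖c n‖ ^ 2 := sq_nonneg _
      rw [div_mul_eq_mul_div, le_div_iff₀ hM2m2]
      nlinarith [mul_le_mul_of_nonneg_left h1 h2]
    apply squeeze_zero' (Eventually.of_forall fun n => sq_nonneg _) hev
    have := hc2M.const_mul (2 / (M ^ 2 - m ^ 2))
    simpa using this
  have hcnorm : Tendsto (fun n => ‖c n‖) atTop (nhds 0) := by
    have := hc2.sqrt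
    simp only [Real.sqrt_zero] at this
    refine this.congr fun n => ?_
    exact Real.sqrt_sq (norm_nonneg _)
  have hclim : Tendsto c atTop (nhds 0) := tendsto_zero_iff_norm_tendsto_zero.mpr hcnorm
  -- ‖T w‖² → m², ‖w‖ → 1
  have hTw2 : Tendsto (fun n => ‖T (w n)‖ ^ 2) atTop (nhds (m ^ 2)) := by
    have hre : Tendsto (fun n => ((starRingEnd ℂ) (c n) * ε n).re) atTop (nhds 0) := by
      apply squeeze_zero_norm _ ha
      intro n
      calc ‖((starRingEnd ℂ) (c n) * ε n).re‖ ≤ ‖(starRingEnd ℂ) (c n) * ε n‖ := by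
            rw [Real.norm_eq_abs]; exact Complex.abs_re_le_norm _
        _ = ‖c n‖ * ‖ε n‖ := by rw [norm_mul, RCLike.norm_conj]
        _ ≤ 1 * ‖a n‖ := mul_le_mul (hc_le n) (hε_le n) (norm_nonneg _) zero_le_one
        _ = ‖a n‖ := one_mul _
    have hcomb : Tendsto
        (fun n => ‖T (v n)‖ ^ 2 - ‖c n‖ ^ 2 * ‖T (u n)‖ ^ 2 - 2 * ((starRingEnd ℂ) (c n) * ε n).re)
        atTop (nhds (m ^ 2)) := by
      have := (hTv2.sub (hc2.mul hTu2)).sub (hre.const_mul 2)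
      simpa using this
    refine hcomb.congr fun n => ?_
    have := hTv_id n
    linarith
  have hwnorm : Tendsto (fun n => ‖w n‖) atTop (nhds 1) := by
    have h1 : Tendsto (fun n => ‖w n‖ ^ 2) atTop (nhds 1) := by
      have := (tendsto_const_nhds (x := (1:ℝ))).sub hc2
      simp only [sub_zero] at this
      exact this.congr fun n => (hw_sq n).symm
    have := h1.sqrt
    simp only [Real.sqrt_one] at this
    exact this.congr fun n => Real.sqrt_sq (norm_nonneg _)
  have hw2lim : Tendsto (fun n => ‖w n‖ ^ 2) atTop (nhds 1) := by
    have := hwnorm.pow 2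
    simpa using this
  -- the trial vectors
  set x' := fun n => ((‖w n‖ : ℝ) : ℂ) • u n + w n with hx'def
  set y' := fun n => ((‖w n‖ : ℝ) : ℂ) • u n - w n with hy'def
  have hwu : ∀ n, ⟪w n, u n⟫ = 0 := by
    intro n
    rw [← inner_conj_symm, hucw n, map_zero]
  have hTx'eq : ∀ n, T (x' n) = (‖w n‖ : ℂ) • T (u n) + T (w n) := by
    intro n; rw [hx'def]; simp
  have hTy'eq : ∀ n, T (y' n) = (‖w n‖ : ℂ) • T (u n) - T (w n) := by
    intro n; rw [hy'def]; simp
  have hconjTw : ∀ n, (⟪T (w n), T (u n)⟫ : ℂ) = (starRingEnd ℂ) (ε n) := by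
    intro n
    rw [← inner_conj_symm]
  have hQid : ∀ n, (⟪T (x' n), T (y' n)⟫ : ℂ)
      = ((‖w n‖ ^ 2 * ‖T (u n)‖ ^ 2 - ‖T (w n)‖ ^ 2 : ℝ) : ℂ)
        + (‖w n‖ : ℂ) * ((starRingEnd ℂ) (ε n) - ε n) := by
    intro n
    have hee : (⟪T (u n), T (w n)⟫ : ℂ) = ε n := rfl
    rw [hTx'eq n, hTy'eq n]
    simp only [inner_sub_right, inner_add_left, inner_smul_left, inner_smul_right,
      Complex.conj_ofReal, hee, hconjTw n, inner_self_eq_norm_sq_to_K]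
    push_cast
    ring_nf
    rfl
  have hεre : Tendsto (fun n => (ε n).re) atTop (nhds 0) := by
    have := (Complex.continuous_re.tendsto 0).comp hεlim
    simpa [Function.comp_def] using this
  have hεconj : Tendsto (fun n => (starRingEnd ℂ) (ε n)) atTop (nhds 0) := by
    have := (continuous_star.tendsto (0:ℂ)).comp hεlim
    simpa [Function.comp_def] using this
  have hwC : Tendsto (fun n => ((‖w n‖ : ℝ) : ℂ)) atTop (nhds 1) := by
    have := (Complex.continuous_ofReal.tendsto 1).comp hwnorm
    simpa [Function.comp_def] using this
  have hQlim : Tendsto (fun n => (⟪T (x' n), T (y' n)⟫ : ℂ)) atTop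
      (nhds ((M ^ 2 - m ^ 2 : ℝ) : ℂ)) := by
    have h1 : Tendsto (fun n => (‖w n‖ ^ 2 * ‖T (u n)‖ ^ 2 - ‖T (w n)‖ ^ 2 : ℝ)) atTop
        (nhds (M ^ 2 - m ^ 2)) := by
      have := (hw2lim.mul hTu2).sub hTw2
      simpa using this
    have h2 : Tendsto (fun n => ((‖w n‖ ^ 2 * ‖T (u n)‖ ^ 2 - ‖T (w n)‖ ^ 2 : ℝ) : ℂ)) atTop
        (nhds ((M ^ 2 - m ^ 2 : ℝ) : ℂ)) := by
      exact (Complex.continuous_ofReal.tendsto _).comp h1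
    have h3 : Tendsto (fun n => (‖w n‖ : ℂ) * ((starRingEnd ℂ) (ε n) - ε n)) atTop
        (nhds 0) := by
      have := hwC.mul (hεconj.sub hεlim)
      simpa using this
    have := h2.add h3
    rw [add_zero] at this
    exact this.congr fun n => (hQid n).symm
  have hQnorm : Tendsto (fun n => ‖(⟪T (x' n), T (y' n)⟫ : ℂ)‖) atTop (nhds (M ^ 2 - m ^ 2)) := by
    have := hQlim.norm
    rwa [Complex.norm_real, Real.norm_eq_abs, abs_of_pos hM2m2] at this
  -- norms of images
  have hTx'sq : ∀ n, ‖T (x' n)‖ ^ 2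
      = ‖w n‖ ^ 2 * ‖T (u n)‖ ^ 2 + 2 * (‖w n‖ * (ε n).re) + ‖T (w n)‖ ^ 2 := by
    intro n
    have hee : (⟪T (u n), T (w n)⟫ : ℂ) = ε n := rfl
    rw [hTx'eq n, @norm_add_sq ℂ, inner_smul_left, Complex.conj_ofReal, hee, norm_smul]
    simp only [RCLike.re_to_complex, Complex.mul_re, Complex.ofReal_re, Complex.ofReal_im,
      Complex.norm_real, Real.norm_eq_abs, abs_norm]
    ring
  have hTy'sq : ∀ n, ‖T (y' n)‖ ^ 2
      = ‖w n‖ ^ 2 * ‖T (u n)‖ ^ 2 - 2 * (‖w n‖ * (ε n).re) + ‖T (w n)‖ ^ 2 := by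
    intro n
    have hee : (⟪T (u n), T (w n)⟫ : ℂ) = ε n := rfl
    rw [hTy'eq n, @norm_sub_sq ℂ, inner_smul_left, Complex.conj_ofReal, hee, norm_smul]
    simp only [RCLike.re_to_complex, Complex.mul_re, Complex.ofReal_re, Complex.ofReal_im,
      Complex.norm_real, Real.norm_eq_abs, abs_norm]
    ring
  have hTx'lim : Tendsto (fun n => ‖T (x' n)‖) atTop (nhds (Real.sqrt (M ^ 2 + m ^ 2))) := by
    have h1 : Tendsto (fun n => ‖T (x' n)‖ ^ 2) atTop (nhds (M ^ 2 + m ^ 2)) := by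
      have := ((hw2lim.mul hTu2).add ((hwnorm.mul hεre).const_mul 2)).add hTw2
      simp only [one_mul, mul_zero, add_zero] at this
      exact this.congr fun n => by rw [hTx'sq n]
    have := h1.sqrt
    exact (this.congr fun n => Real.sqrt_sq (norm_nonneg _))
  have hTy'lim : Tendsto (fun n => ‖T (y' n)‖) atTop (nhds (Real.sqrt (M ^ 2 + m ^ 2))) := by
    have h1 : Tendsto (fun n => ‖T (y' n)‖ ^ 2) atTop (nhds (M ^ 2 + m ^ 2)) := by
      have := ((hw2lim.mul hTu2).sub ((hwnorm.mul hεre).const_mul 2)).add hTw2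
      simp only [one_mul, mul_zero, sub_zero] at this
      exact this.congr fun n => by rw [hTy'sq n]
    have := h1.sqrt
    exact (this.congr fun n => Real.sqrt_sq (norm_nonneg _))
  -- the eventual strict inequality
  have hsqrt_mul : Real.sqrt (M ^ 2 + m ^ 2) * Real.sqrt (M ^ 2 + m ^ 2) = M ^ 2 + m ^ 2 :=
    Real.mul_self_sqrt hMm2.le
  have hkey : (k - δ) * (Real.sqrt (M ^ 2 + m ^ 2) * Real.sqrt (M ^ 2 + m ^ 2)) < M ^ 2 - m ^ 2 := by
    rw [hsqrt_mul]
    have h1 : k * (M ^ 2 + m ^ 2) = M ^ 2 - m ^ 2 := by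
      rw [hkdef]; field_simp
    nlinarith [mul_pos hδ hMm2]
  have hLHSlim : Tendsto (fun n => (k - δ) * (‖T (x' n)‖ * ‖T (y' n)‖)) atTop
      (nhds ((k - δ) * (Real.sqrt (M ^ 2 + m ^ 2) * Real.sqrt (M ^ 2 + m ^ 2)))) :=
    (hTx'lim.mul hTy'lim).const_mul _
  have hev : ∀ᶠ n in atTop,
      (k - δ) * (‖T (x' n)‖ * ‖T (y' n)‖) < ‖(⟪T (x' n), T (y' n)⟫ : ℂ)‖ :=
    hLHSlim.eventually_lt hQnorm hkey
  have hev2 : ∀ᶠ n in atTop, 0 < ‖w n‖ := hwnorm.eventually (eventually_gt_nhds zero_lt_one)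
  obtain ⟨n, hn1, hn2⟩ := (hev.and hev2).exists
  -- assemble the unit vectors
  set ρ := ‖w n‖ with hρdef
  set s := (Real.sqrt 2 * ρ)⁻¹ with hsdef
  have hsq2 : (0:ℝ) < Real.sqrt 2 := Real.sqrt_pos.mpr (by norm_num)
  have hs : 0 < s := by rw [hsdef]; positivity
  have hx'norm : ‖x' n‖ = Real.sqrt 2 * ρ := by
    have h0 : (⟪((ρ : ℝ) : ℂ) • u n, w n⟫ : ℂ) = 0 := by
      rw [inner_smul_left, hucw n, mul_zero]
    have h1 := norm_add_sq_eq_norm_sq_add_norm_sq_of_inner_eq_zero _ _ h0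
    rw [norm_smul, hu1 n, mul_one, Complex.norm_real, Real.norm_eq_abs, abs_of_pos hn2] at h1
    have h2 : ‖x' n‖ = Real.sqrt (‖x' n‖ * ‖x' n‖) := by
      rw [Real.sqrt_mul_self (norm_nonneg _)]
    rw [h2, hx'def]
    rw [h1]
    rw [show ρ * ρ + ρ * ρ = 2 * ρ ^ 2 by ring]
    rw [Real.sqrt_mul (by norm_num : (0:ℝ) ≤ 2), Real.sqrt_sq hn2.le]
  have hy'norm : ‖y' n‖ = Real.sqrt 2 * ρ := by
    have h0 : (⟪((ρ : ℝ) : ℂ) • u n, w n⟫ : ℂ) = 0 := by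
      rw [inner_smul_left, hucw n, mul_zero]
    have h1 : ‖y' n‖ ^ 2 = ‖((ρ : ℝ) : ℂ) • u n‖ ^ 2 + ‖w n‖ ^ 2 := by
      rw [hy'def, @norm_sub_sq ℂ, h0]
      simp [hρdef]
    rw [norm_smul, hu1 n, mul_one, Complex.norm_real, Real.norm_eq_abs, abs_of_pos hn2] at h1
    have h2 : ‖y' n‖ = Real.sqrt (‖y' n‖ ^ 2) := by
      rw [Real.sqrt_sq (norm_nonneg _)]
    rw [h2, hy'def]
    rw [h1]
    rw [show ρ ^ 2 + ρ ^ 2 = 2 * ρ ^ 2 by ring]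
    rw [Real.sqrt_mul (by norm_num : (0:ℝ) ≤ 2), Real.sqrt_sq hn2.le]
  have hsρ : s * (Real.sqrt 2 * ρ) = 1 := by
    rw [hsdef]; field_simp
  refine ⟨(s : ℂ) • x' n, (s : ℂ) • y' n, ?_, ?_, ?_, ?_⟩
  · rw [norm_smul, Complex.norm_real, Real.norm_eq_abs, abs_of_pos hs, hx'norm, hsρ]
  · rw [norm_smul, Complex.norm_real, Real.norm_eq_abs, abs_of_pos hs, hy'norm, hsρ]
  · have hxy' : (⟪x' n, y' n⟫ : ℂ) = 0 := by
      rw [hx'def, hy'def]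
      simp only [inner_sub_right, inner_add_left, inner_smul_left, inner_smul_right,
        Complex.conj_ofReal, hucw n, hwu n, inner_self_eq_norm_sq_to_K, hu1 n]
      push_cast
      ring_nf
      exact sub_self _
    rw [inner_smul_left, inner_smul_right, hxy', mul_zero, mul_zero]
  · have hTxn : ‖T ((s : ℂ) • x' n)‖ = s * ‖T (x' n)‖ := by
      rw [map_smul, norm_smul, Complex.norm_real, Real.norm_eq_abs, abs_of_pos hs]
    have hTyn : ‖T ((s : ℂ) • y' n)‖ = s * ‖T (y' n)‖ := by
      rw [map_smul, norm_smul, Complex.norm_real, Real.norm_eq_abs, abs_of_pos hs]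
    have hip : (⟪T ((s : ℂ) • x' n), T ((s : ℂ) • y' n)⟫ : ℂ)
        = ((s ^ 2 : ℝ) : ℂ) * ⟪T (x' n), T (y' n)⟫ := by
      rw [map_smul, map_smul, inner_smul_left, inner_smul_right, Complex.conj_ofReal]
      push_cast
      ring
    rw [hip, norm_mul, hTxn, hTyn, Complex.norm_real, Real.norm_eq_abs,
      abs_of_pos (show (0:ℝ) < s ^ 2 by positivity)]
    calc (k - δ) * (s * ‖T (x' n)‖ * (s * ‖T (y' n)‖))
        = s ^ 2 * ((k - δ) * (‖T (x' n)‖ * ‖T (y' n)‖)) := by ring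
      _ < s ^ 2 * ‖(⟪T (x' n), T (y' n)⟫ : ℂ)‖ := by
          exact mul_lt_mul_of_pos_left hn1 (by positivity)


/-- For `m(T) > 0`, the constant `(‖T‖² − m(T)²)/(‖T‖² + m(T)²)` is approached by orthogonal
unit vectors, and hence is a lower bound for `ε̂(T)`. -/
theorem epsHat_lower_bound (hdim : 2 ≤ Module.rank ℂ H) (T : H →L[ℂ] H)
    (hm : 0 < minMod T) :
    (∀ δ : ℝ, 0 < δ → ∃ x y : H, ‖x‖ = 1 ∧ ‖y‖ = 1 ∧ ⟪x, y⟫ = 0 ∧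
      ((‖T‖ ^ 2 - minMod T ^ 2) / (‖T‖ ^ 2 + minMod T ^ 2) - δ) * (‖T x‖ * ‖T y‖)
        < ‖⟪T x, T y⟫‖) ∧
    (‖T‖ ^ 2 - minMod T ^ 2) / (‖T‖ ^ 2 + minMod T ^ 2) ≤ epsHat T := by
  have hex : ∀ δ : ℝ, 0 < δ → ∃ x y : H, ‖x‖ = 1 ∧ ‖y‖ = 1 ∧ ⟪x, y⟫ = 0 ∧
      ((‖T‖ ^ 2 - minMod T ^ 2) / (‖T‖ ^ 2 + minMod T ^ 2) - δ) * (‖T x‖ * ‖T y‖)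
        < ‖⟪T x, T y⟫‖ := fun δ hδ => key_exists hdim T hm δ hδ
  refine ⟨hex, ?_⟩
  set k := (‖T‖ ^ 2 - minMod T ^ 2) / (‖T‖ ^ 2 + minMod T ^ 2) with hk
  have h1 : (1:ℝ) ∈ {ε : ℝ | 0 ≤ ε ∧ ε ≤ 1 ∧ IsAOP T ε} :=
    ⟨zero_le_one, le_refl 1, fun x y _ => by
      simpa using norm_inner_le_norm (𝕜 := ℂ) (T x) (T y)⟩
  apply le_csInf ⟨1, h1⟩
  rintro ε ⟨hε0, hε1, hAOP⟩
  by_contra hcon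
  push_neg at hcon
  obtain ⟨x, y, hx, hy, hxy, hlt⟩ := hex (k - ε) (by linarith)
  have hle := hAOP x y hxy
  rw [show k - (k - ε) = ε by ring] at hlt
  linarith
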